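/- For all integers n ≥ 4 and k ≥ 1, one has k + ⌈(n − 3 − k)/(2k − 1)⌉ ≥ ⌈√(2n − 7)⌉, where the inner ceiling is applied to the real quotient (n − 3 − k)/(2k − 1) and the outer ceiling to the real square root √(2n − 7). -/

import Mathlib

theorem stmt_1 (n k : ℤ) (hn : n ≥ 4) (hk : k ≥ 1) :
    k + ⌈((n : ℝ) - 3 - (k : ℝ)) / (2 * (k : ℝ) - 1)⌉ ≥ ⌈Real.sqrt (2 * (n : ℝ) - 7)⌉ := by
  have hk' : (0:ℝ) < 2 * (k:ℝ) - 1 := by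
    have : (1:ℝ) ≤ (k:ℝ) := by exact_mod_cast hk
    linarith
  have hn' : (4:ℝ) ≤ (n:ℝ) := by exact_mod_cast hn
  set q : ℝ := ((n : ℝ) - 3 - (k : ℝ)) / (2 * (k : ℝ) - 1) with hq
  have h2 : (k:ℝ) + q = (2*(k:ℝ)^2 - 2*(k:ℝ) + (n:ℝ) - 3) / (2*(k:ℝ)-1) := by
    rw [hq, eq_div_iff hk'.ne', add_mul, div_mul_cancel₀ _ hk'.ne']; ring
  have h1 : (0:ℝ) ≤ (k:ℝ) + q := by
    rw [h2]
    apply div_nonneg _ (le_of_lt hk')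
    have : (1:ℝ) ≤ (k:ℝ) := by exact_mod_cast hk
    nlinarith
  have key : Real.sqrt (2 * (n:ℝ) - 7) ≤ (k:ℝ) + q := by
    calc Real.sqrt (2 * (n:ℝ) - 7) ≤ Real.sqrt (((k:ℝ) + q)^2) := by
          apply Real.sqrt_le_sqrt
          rw [h2, div_pow]
          rw [le_div_iff₀ (by positivity)]
          nlinarith [sq_nonneg ((2*(k:ℝ)-1)^2 + 1 - 2*((n:ℝ)-3))]
      _ = (k:ℝ) + q := Real.sqrt_sq h1
  have := Int.ceil_le_ceil key
  rwa [add_comm, Int.ceil_add_intCast, add_comm] at this
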